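/- arXiv:1912.06925 — 11 statements merged into one kernel-verified Lean document; each statement's English description precedes it below -/
import Mathlib

section
/- Let A be a non-degenerate n-dimensional evolution algebra with natural basis B, and let d be a derivation with matrix (d_{ij}). If i ≠ j and D^1(i) ∩ D^1(j) = ∅, then d_{ij} = d_{ji} = 0. -/
/-- Non-degenerate case: if `i ≠ j` and `D¹(i) ∩ D¹(j) = ∅`, then `d_{ij} = d_{ji} = 0`. -/
theorem derivation_disjoint_descendants_zero {K : Type*} [Field K] {n : ℕ}
    (ω d : Matrix (Fin n) (Fin n) K)
    (hnd : ∀ i : Fin n, ∃ k, ω i k ≠ 0)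
    (hd1 : ∀ i j k : Fin n, i ≠ j → ω j k * d i j + ω i k * d j i = 0)
    (hd2 : ∀ i j : Fin n, ∑ k, ω i k * d k j = 2 * ω i j * d i i)
    (i j : Fin n) (hij : i ≠ j)
    (hdisj : {k | ω i k ≠ 0} ∩ {k | ω j k ≠ 0} = ∅) :
    d i j = 0 ∧ d j i = 0 := by
  obtain ⟨k, hk⟩ := hnd i
  obtain ⟨l, hl⟩ := hnd j
  have hjk : ω j k = 0 := by
    by_contra h
    have : k ∈ {k | ω i k ≠ 0} ∩ {k | ω j k ≠ 0} := ⟨hk, h⟩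
    rw [hdisj] at this; exact this
  have hil : ω i l = 0 := by
    by_contra h
    have : l ∈ {k | ω i k ≠ 0} ∩ {k | ω j k ≠ 0} := ⟨h, hl⟩
    rw [hdisj] at this; exact this
  constructor
  · have := hd1 i j l hij
    rw [hil] at this
    simpa [hl] using this
  · have := hd1 i j k hij
    rw [hjk] at this
    simp only [zero_mul, zero_add] at this
    exact (mul_eq_zero.mp this).resolve_left hk
end

section
/- Let A be a non-degenerate n-dimensional evolution algebra (over a field of characteristic 0) with natural basis B and structure matrix (ω_{ij}), and let d be a derivation with matrix (d_{ij}). If d_{ij} = 0 for all i ≠ j, then d_{ii} = 0 for all i, i.e., d = 0. -/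
/-- Non-degenerate, characteristic zero: if all off-diagonal entries of the
derivation matrix vanish, then the diagonal entries vanish as well, i.e. `d = 0`. -/
theorem derivation_diag_zero {K : Type*} [Field K] [CharZero K] {n : ℕ}
    (ω d : Matrix (Fin n) (Fin n) K)
    (hnd : ∀ i : Fin n, ∃ k, ω i k ≠ 0)
    (hd1 : ∀ i j k : Fin n, i ≠ j → ω j k * d i j + ω i k * d j i = 0)
    (hd2 : ∀ i j : Fin n, ∑ k, ω i k * d k j = 2 * ω i j * d i i)
    (hoff : ∀ i j : Fin n, i ≠ j → d i j = 0) :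
    d = 0 := by
  -- Step lemma: if ω i j ≠ 0 then d j j = 2 * d i i
  have step : ∀ i j : Fin n, ω i j ≠ 0 → d j j = 2 * d i i := by
    intro i j hω
    have h := hd2 i j
    have hsum : ∑ k, ω i k * d k j = ω i j * d j j := by
      rw [Finset.sum_eq_single j]
      · intro k _ hk
        rw [hoff k j hk, mul_zero]
      · intro hj; exact absurd (Finset.mem_univ j) hj
    rw [hsum] at h
    have : ω i j * d j j = ω i j * (2 * d i i) := by linear_combination h
    exact mul_left_cancel₀ hω this
  -- diagonal is zero
  have diag : ∀ i : Fin n, d i i = 0 := by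
    intro i
    -- build a path
    let f : ℕ → Fin n := fun m => Nat.rec i (fun _ x => (hnd x).choose) m
    have hf : ∀ m, ω (f m) (f (m+1)) ≠ 0 := fun m => (hnd (f m)).choose_spec
    have key : ∀ m, d (f m) (f m) = 2 ^ m * d i i := by
      intro m
      induction m with
      | zero => simp [f]
      | succ m ih =>
        have := step (f m) (f (m+1)) (hf m)
        rw [this, ih]; ring
    -- pigeonhole
    have hcard : Fintype.card (Fin n) < Fintype.card (Fin (n+1)) := by simp
    obtain ⟨a, b, hab, heq⟩ :=
      Fintype.exists_ne_map_eq_of_card_lt (fun m : Fin (n+1) => f m) hcard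
    have h2 : (2:K) ^ (a:ℕ) * d i i = 2 ^ (b:ℕ) * d i i := by
      rw [← key a, ← key b, heq]
    have hne : (2:K) ^ (a:ℕ) ≠ 2 ^ (b:ℕ) := by
      intro h
      have : ((2^(a:ℕ) : ℕ) : K) = ((2^(b:ℕ) : ℕ) : K) := by push_cast; exact h
      have := Nat.cast_injective this
      exact hab (Fin.ext (Nat.pow_right_injective (le_refl 2) this))
    have : ((2:K) ^ (a:ℕ) - 2 ^ (b:ℕ)) * d i i = 0 := by linear_combination h2
    rcases mul_eq_zero.mp this with h | h
    · exact absurd (sub_eq_zero.mp h) hne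
    · exact h
  ext i j
  by_cases hij : i = j
  · subst hij; simpa using diag i
  · simpa using hoff i j hij
end

section
/- Let A be a non-degenerate n-dimensional evolution algebra with natural basis B, and let d be a derivation with matrix (d_{ij}). If d_{ij} ≠ 0 for some i ≠ j, then i and j are twins relative to B, i.e., D^1(i) = D^1(j). -/
/-- Non-degenerate case: if `d_{ij} ≠ 0` for some `i ≠ j`, then `i` and `j`
are twins relative to `B`, i.e. `D¹(i) = D¹(j)`. -/
theorem derivation_nonzero_implies_twins {K : Type*} [Field K] {n : ℕ}
    (ω d : Matrix (Fin n) (Fin n) K)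
    (hnd : ∀ i : Fin n, ∃ k, ω i k ≠ 0)
    (hd1 : ∀ i j k : Fin n, i ≠ j → ω j k * d i j + ω i k * d j i = 0)
    (hd2 : ∀ i j : Fin n, ∑ k, ω i k * d k j = 2 * ω i j * d i i)
    (i j : Fin n) (hij : i ≠ j) (hdij : d i j ≠ 0) :
    {k | ω i k ≠ 0} = {k | ω j k ≠ 0} := by
  have hdji : d j i ≠ 0 := by
    intro h0
    obtain ⟨k, hk⟩ := hnd j
    have := hd1 i j k hij
    rw [h0, mul_zero, add_zero, mul_eq_zero] at this
    tauto
  ext k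
  simp only [Set.mem_setOf_eq]
  have h := hd1 i j k hij
  constructor
  · intro hik hjk
    rw [hjk, zero_mul, zero_add, mul_eq_zero] at h
    tauto
  · intro hjk hik
    rw [hik, zero_mul, add_zero, mul_eq_zero] at h
    tauto
end

section
/- Let A be an irreducible non-degenerate n-dimensional evolution algebra over a field of characteristic 0 with natural basis B. If A is twin-free relative to B (i.e., D^1(i) ≠ D^1(j) for all i ≠ j), then every derivation of A is zero. -/
/-- Main theorem: an irreducible (i.e. connected associated graph) non-degenerate
evolution algebra over a field of characteristic zero that is twin-free relative
to `B` has only the zero derivation. -/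
theorem twin_free_derivation_zero {K : Type*} [Field K] [CharZero K] {n : ℕ}
    (ω d : Matrix (Fin n) (Fin n) K)
    (hnd : ∀ i : Fin n, ∃ k, ω i k ≠ 0)
    (hirr : (SimpleGraph.fromRel (fun i j : Fin n => ω i j ≠ 0)).Connected)
    (htf : ∀ i j : Fin n, i ≠ j → {k | ω i k ≠ 0} ≠ {k | ω j k ≠ 0})
    (hd1 : ∀ i j k : Fin n, i ≠ j → ω j k * d i j + ω i k * d j i = 0)
    (hd2 : ∀ i j : Fin n, ∑ k, ω i k * d k j = 2 * ω i j * d i i) :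
    d = 0 := by
  -- Step 1: off-diagonal entries of d vanish
  have hoff : ∀ i j : Fin n, i ≠ j → d i j = 0 := by
    intro i j hij
    by_contra hdij
    have hdji : d j i ≠ 0 := by
      intro h0
      obtain ⟨k, hk⟩ := hnd j
      have h := hd1 i j k hij
      rw [h0, mul_zero, add_zero] at h
      exact hdij (by
        rcases mul_eq_zero.mp h with h' | h'
        · exact absurd h' hk
        · exact h')
    apply htf i j hij
    ext k
    have h := hd1 i j k hij
    simp only [Set.mem_setOf_eq]
    constructor
    · intro hik hjk0
      rw [hjk0, zero_mul, zero_add] at h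
      rcases mul_eq_zero.mp h with h'' | h''
      · exact hik h''
      · exact hdji h''
    · intro hjk hik0
      rw [hik0, zero_mul, add_zero] at h
      rcases mul_eq_zero.mp h with h'' | h''
      · exact hjk h''
      · exact hdij h''
  -- Step 2: ω i j ≠ 0 → d j j = 2 * d i i
  have hB : ∀ i j : Fin n, ω i j ≠ 0 → d j j = 2 * d i i := by
    intro i j hij
    have h := hd2 i j
    have hsum : ∑ k, ω i k * d k j = ω i j * d j j := by
      rw [Finset.sum_eq_single j]
      · intro k _ hk
        rw [hoff k j hk, mul_zero]
      · intro hj; exact absurd (Finset.mem_univ j) hj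
    rw [hsum] at h
    have h2 : ω i j * d j j = ω i j * (2 * d i i) := by linear_combination h
    exact mul_left_cancel₀ hij h2
  -- Step 3: diagonal entries vanish
  have hC : ∀ i : Fin n, d i i = 0 := by
    obtain ⟨f, hf⟩ : ∃ f : Fin n → Fin n, ∀ k, ω k (f k) ≠ 0 :=
      ⟨fun k => (hnd k).choose, fun k => (hnd k).choose_spec⟩
    intro i
    have key : ∀ m : ℕ, d (f^[m] i) (f^[m] i) = 2 ^ m * d i i := by
      intro m
      induction m with
      | zero => simp
      | succ m ih =>
        rw [Function.iterate_succ_apply', hB _ _ (hf _), ih]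
        ring
    have hlt : Fintype.card (Fin n) < Fintype.card (Fin (n + 1)) := by
      simp
    obtain ⟨a, b, hab, heq⟩ :=
      Fintype.exists_ne_map_eq_of_card_lt (fun m : Fin (n + 1) => f^[(m : ℕ)] i) hlt
    have h2 : (2 : K) ^ (a : ℕ) * d i i = (2 : K) ^ (b : ℕ) * d i i := by
      rw [← key, ← key, heq]
    have hne : (2 : K) ^ (a : ℕ) ≠ (2 : K) ^ (b : ℕ) := by
      intro h
      apply hab
      have : ((2 ^ (a : ℕ) : ℕ) : K) = ((2 ^ (b : ℕ) : ℕ) : K) := by push_cast; exact h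
      have := Nat.cast_injective this
      have := Nat.pow_right_injective (le_refl 2) this
      exact Fin.ext this
    have : ((2 : K) ^ (a : ℕ) - (2 : K) ^ (b : ℕ)) * d i i = 0 := by linear_combination h2
    rcases mul_eq_zero.mp this with h' | h'
    · exact absurd (sub_eq_zero.mp h') hne
    · exact h'
  ext i j
  by_cases hij : i = j
  · subst hij
    simpa using hC i
  · simpa using hoff i j hij
end

section
/- Let A be a non-degenerate n-dimensional evolution algebra with natural basis B, with twin partition {T_1,...,T_k} of the index set Λ relative to B. Then every derivation d of A, viewed as a matrix (d_{ij}), is block diagonal with respect to the twin partition: d_{ij} = 0 whenever i and j belong to different twin classes. -/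
/-- Any derivation of a non-degenerate evolution algebra is block diagonal with
respect to the twin partition: `d_{ij} = 0` whenever `i` and `j` belong to
different twin classes, i.e. whenever `D¹(i) ≠ D¹(j)`. -/
theorem derivation_block_diagonal {K : Type*} [Field K] {n : ℕ}
    (ω d : Matrix (Fin n) (Fin n) K)
    (hnd : ∀ i : Fin n, ∃ k, ω i k ≠ 0)
    (hd1 : ∀ i j k : Fin n, i ≠ j → ω j k * d i j + ω i k * d j i = 0)
    (hd2 : ∀ i j : Fin n, ∑ k, ω i k * d k j = 2 * ω i j * d i i)
    (i j : Fin n) (hij : {k | ω i k ≠ 0} ≠ {k | ω j k ≠ 0}) :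
    d i j = 0 := by
  have hne : i ≠ j := by rintro rfl; exact hij rfl
  obtain ⟨k, hk⟩ : ∃ k, ¬(ω i k ≠ 0 ↔ ω j k ≠ 0) := by
    by_contra h
    push_neg at h
    exact hij (Set.ext fun k => h k)
  rw [not_iff] at hk
  by_cases hik : ω i k = 0
  · -- then ω j k ≠ 0 and hd1 gives d i j = 0 directly
    have hjk : ω j k ≠ 0 := hk.mp (not_not.mpr hik)
    have h1 := hd1 i j k hne
    rw [hik, zero_mul, add_zero] at h1
    exact (mul_eq_zero.mp h1).resolve_left hjk
  · -- then ω j k = 0, so d j i = 0; use nondegeneracy at j to kill d i j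
    have hjk : ω j k = 0 := not_not.mp (fun h => hik (not_not.mp (hk.mpr h)))
    have h1 := hd1 i j k hne
    rw [hjk, zero_mul, zero_add] at h1
    have hdji : d j i = 0 := (mul_eq_zero.mp h1).resolve_left hik
    obtain ⟨k', hk'⟩ := hnd j
    have h2 := hd1 i j k' hne
    rw [hdji, mul_zero, add_zero] at h2
    exact (mul_eq_zero.mp h2).resolve_left hk'
end

section
/- Let A be an n-dimensional evolution algebra with natural basis B and structure matrix (ω_{ij}), and let d be a derivation. Suppose i ≠ j and there exist k, ℓ ∈ D^1(i) such that ω_{ik} ω_{jℓ} − ω_{iℓ} ω_{jk} ≠ 0. Then d_{ij} = d_{ji} = 0. -/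
/-- If `i ≠ j` and there exist `k, ℓ ∈ D¹(i)` with
`ω_{ik} ω_{jℓ} − ω_{iℓ} ω_{jk} ≠ 0`, then `d_{ij} = d_{ji} = 0`. -/
theorem derivation_det_zero {K : Type*} [Field K] {n : ℕ}
    (ω d : Matrix (Fin n) (Fin n) K)
    (hd1 : ∀ i j k : Fin n, i ≠ j → ω j k * d i j + ω i k * d j i = 0)
    (hd2 : ∀ i j : Fin n, ∑ k, ω i k * d k j = 2 * ω i j * d i i)
    (i j : Fin n) (hij : i ≠ j) (k l : Fin n)
    (hk : ω i k ≠ 0) (hl : ω i l ≠ 0)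
    (hdet : ω i k * ω j l - ω i l * ω j k ≠ 0) :
    d i j = 0 ∧ d j i = 0 := by
  have h1 := hd1 i j k hij
  have h2 := hd1 i j l hij
  have hij0 : d i j * (ω i k * ω j l - ω i l * ω j k) = 0 := by
    have : ω i l * (ω j k * d i j + ω i k * d j i)
        - ω i k * (ω j l * d i j + ω i l * d j i) = 0 := by rw [h1, h2]; ring
    linear_combination -this
  have hji0 : d j i * (ω i k * ω j l - ω i l * ω j k) = 0 := by
    have : ω j l * (ω j k * d i j + ω i k * d j i)
        - ω j k * (ω j l * d i j + ω i l * d j i) = 0 := by rw [h1, h2]; ring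
    linear_combination this
  exact ⟨by rcases mul_eq_zero.mp hij0 with h | h; exacts [h, absurd h hdet],
    by rcases mul_eq_zero.mp hji0 with h | h; exacts [h, absurd h hdet]⟩
end

section
/- Let A be an n-dimensional evolution algebra with natural basis B, let d be a derivation, and let i be an index whose twin class relative to B is the singleton {i}. If i ∈ D^1(i) (i.e., ω_{ii} ≠ 0), then d_{ii} = 0. -/
/-- If the twin class of `i` is the singleton `{i}` and `i ∈ D¹(i)`
(i.e. `ω_{ii} ≠ 0`), then `d_{ii} = 0`. -/
theorem derivation_singleton_class_loop {K : Type*} [Field K] [CharZero K] {n : ℕ}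
    (ω d : Matrix (Fin n) (Fin n) K)
    (hnd : ∀ i : Fin n, ∃ k, ω i k ≠ 0)
    (hd1 : ∀ i j k : Fin n, i ≠ j → ω j k * d i j + ω i k * d j i = 0)
    (hd2 : ∀ i j : Fin n, ∑ k, ω i k * d k j = 2 * ω i j * d i i)
    (i : Fin n)
    (hsingle : ∀ j : Fin n, {k | ω j k ≠ 0} = {k | ω i k ≠ 0} → j = i)
    (hloop : ω i i ≠ 0) :
    d i i = 0 := by
  have key : ∀ k : Fin n, k ≠ i → d k i = 0 := by
    intro k hk
    have hne : {m | ω k m ≠ 0} ≠ {m | ω i m ≠ 0} := fun h => hk (hsingle k h)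
    have hm : ∃ m, ¬(ω k m ≠ 0 ↔ ω i m ≠ 0) := by
      by_contra h
      push_neg at h
      exact hne (Set.ext fun m => h m)
    obtain ⟨m, hm⟩ := hm
    by_cases h1 : ω k m = 0
    · have h2 : ω i m ≠ 0 := by
        intro h2
        exact hm ⟨fun ha => absurd h1 ha, fun hb => absurd h2 hb⟩
      have e1 := hd1 k i m hk
      rw [h1, zero_mul, add_zero] at e1
      exact (mul_eq_zero.mp e1).resolve_left h2
    · have h2 : ω i m = 0 := by
        by_contra h2
        exact hm ⟨fun _ => h2, fun _ => h1⟩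
      have e1 := hd1 k i m hk
      rw [h2, zero_mul, zero_add] at e1
      have hdik : d i k = 0 := (mul_eq_zero.mp e1).resolve_left h1
      have e2 := hd1 i k i (Ne.symm hk)
      rw [hdik, mul_zero, zero_add] at e2
      exact (mul_eq_zero.mp e2).resolve_left hloop
  have hsum := hd2 i i
  rw [Finset.sum_eq_single i (fun k _ hki => by rw [key k hki, mul_zero])
    (fun h => absurd (Finset.mem_univ i) h)] at hsum
  have hx : ω i i * d i i = 0 := by linear_combination -hsum
  exact (mul_eq_zero.mp hx).resolve_left hloop
end

section
/- Let A be a non-degenerate n-dimensional evolution algebra (char 0) with natural basis B, let T be a twin class relative to B with T^{wl} := {i ∈ T : ω_{ii} ≠ 0} nonempty, and let d be a derivation satisfying d_{ij} = 0 for all distinct i, j ∈ T^{wl}. Then d_{ii} = 0 for every i ∈ T. -/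
/-- Let `T` be the twin class of `t₀` with the loop part
`T^{wl} = {i ∈ T : ω_{ii} ≠ 0}` nonempty. If a derivation `d` satisfies
`d_{ij} = 0` for all distinct `i, j ∈ T^{wl}`, then `d_{ii} = 0` for all `i ∈ T`. -/
theorem derivation_loop_class_diag_zero {K : Type*} [Field K] [CharZero K] {n : ℕ}
    (ω d : Matrix (Fin n) (Fin n) K)
    (hnd : ∀ i : Fin n, ∃ k, ω i k ≠ 0)
    (hd1 : ∀ i j k : Fin n, i ≠ j → ω j k * d i j + ω i k * d j i = 0)
    (hd2 : ∀ i j : Fin n, ∑ k, ω i k * d k j = 2 * ω i j * d i i)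
    (t₀ : Fin n)
    (T : Set (Fin n)) (hT : T = {j | {k | ω j k ≠ 0} = {k | ω t₀ k ≠ 0}})
    (hwl : ∃ i ∈ T, ω i i ≠ 0)
    (hoff : ∀ i ∈ T, ∀ j ∈ T, ω i i ≠ 0 → ω j j ≠ 0 → i ≠ j → d i j = 0) :
    ∀ i ∈ T, d i i = 0 := by
  subst hT
  -- If `i` and `j` are not twins, then `d i j = 0`.
  have key : ∀ i j : Fin n, i ≠ j →
      ({k | ω i k ≠ 0} : Set (Fin n)) ≠ {k | ω j k ≠ 0} → d i j = 0 := by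
    intro i j hij hne
    have h : ∃ k, ¬ (ω i k ≠ 0 ↔ ω j k ≠ 0) := by
      by_contra h
      push_neg at h
      exact hne (Set.ext fun k => h k)
    obtain ⟨k, hk⟩ := h
    rw [not_iff] at hk
    by_cases h1 : ω i k = 0
    · have h2 : ω j k ≠ 0 := by tauto
      have h3 := hd1 i j k hij
      rw [h1, zero_mul, add_zero] at h3
      exact (mul_eq_zero.mp h3).resolve_left h2
    · have h2 : ω j k = 0 := by tauto
      have hji : d j i = 0 := by
        have h3 := hd1 j i k (Ne.symm hij)
        rw [h2, zero_mul, add_zero] at h3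
        exact (mul_eq_zero.mp h3).resolve_left h1
      obtain ⟨k', hk'⟩ := hnd j
      have h3 := hd1 i j k' hij
      rw [hji, mul_zero, add_zero] at h3
      exact (mul_eq_zero.mp h3).resolve_left hk'
  obtain ⟨i₀, hi₀T, hi₀⟩ := hwl
  have hi₀T' : ({k | ω i₀ k ≠ 0} : Set (Fin n)) = {k | ω t₀ k ≠ 0} := hi₀T
  have hωi₀ : ∀ i ∈ ({j | {k | ω j k ≠ 0} = {k | ω t₀ k ≠ 0}} : Set (Fin n)),
      ω i i₀ ≠ 0 := by
    intro i hi
    have h1 : i₀ ∈ ({k | ω t₀ k ≠ 0} : Set (Fin n)) := by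
      rw [← hi₀T']; exact hi₀
    have h2 : ({k | ω i k ≠ 0} : Set (Fin n)) = {k | ω t₀ k ≠ 0} := hi
    rw [← h2] at h1
    exact h1
  have main : ∀ i ∈ ({j | {k | ω j k ≠ 0} = {k | ω t₀ k ≠ 0}} : Set (Fin n)),
      ω i i₀ * d i₀ i₀ = 2 * ω i i₀ * d i i := by
    intro i hi
    have hsum : ∑ k, ω i k * d k i₀ = ω i i₀ * d i₀ i₀ := by
      apply Finset.sum_eq_single
      · intro k _ hk
        by_cases hωik : ω i k = 0
        · rw [hωik, zero_mul]
        · by_cases hkT : ({k' | ω k k' ≠ 0} : Set (Fin n)) = {k' | ω t₀ k' ≠ 0}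
          · -- k is a twin of t₀, so ω k k ≠ 0 and hoff applies
            have hkD : k ∈ ({k' | ω t₀ k' ≠ 0} : Set (Fin n)) := by
              have h2 : ({k' | ω i k' ≠ 0} : Set (Fin n)) = {k' | ω t₀ k' ≠ 0} := hi
              rw [← h2]; exact hωik
            have hωkk : ω k k ≠ 0 := by rw [← hkT] at hkD; exact hkD
            rw [hoff k hkT i₀ hi₀T hωkk hi₀ hk, mul_zero]
          · rw [key k i₀ hk (by rw [hi₀T']; exact hkT), mul_zero]
      · intro h
        exact absurd (Finset.mem_univ i₀) h
    rw [← hsum]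
    exact hd2 i i₀
  have hd0 : d i₀ i₀ = 0 := by
    have h := main i₀ hi₀T
    have h' : ω i₀ i₀ * d i₀ i₀ = 0 := by linear_combination -h
    exact (mul_eq_zero.mp h').resolve_left hi₀
  intro i hi
  have h := (main i hi).symm
  rw [hd0, mul_zero, mul_assoc] at h
  rcases mul_eq_zero.mp h with h' | h'
  · exact absurd h' two_ne_zero
  · exact (mul_eq_zero.mp h').resolve_left (hωi₀ i hi)
end

section
/- Let A be a non-degenerate n-dimensional evolution algebra (char 0) with natural basis B, let T be a twin class with T^{wl} := {i ∈ T : ω_{ii} ≠ 0} nonempty, and let d be a derivation with d_{ij} = 0 for all distinct i, j ∈ T^{wl}. Then for every j ∈ T \ T^{wl} and every i ∈ T^{wl}, Σ_{k ∈ T^{wl}} ω_{ik} d_{kj} = 0; in particular, if the submatrix (ω_{ij})_{i,j ∈ T^{wl}} is non-singular, then d_{ij} = 0 whenever i ∈ T^{wl} or j ∈ T^{wl}. -/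
/-- Let `T` be the twin class of `t₀` and `Twl = {i ∈ T : ω_{ii} ≠ 0}` nonempty.
If `d_{ij} = 0` for all distinct `i, j ∈ Twl`, then for every `j ∈ T \ Twl` and
`i ∈ Twl` we have `∑_{k ∈ Twl} ω_{ik} d_{kj} = 0`; and if moreover the submatrix
`(ω_{ij})_{i,j ∈ Twl}` is non-singular, then `d_{ij} = 0` whenever `i ∈ Twl` or
`j ∈ Twl`. -/
theorem derivation_loop_class_structure {K : Type*} [Field K] [CharZero K] {n : ℕ}
    (ω d : Matrix (Fin n) (Fin n) K)
    (hnd : ∀ i : Fin n, ∃ k, ω i k ≠ 0)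
    (hd1 : ∀ i j k : Fin n, i ≠ j → ω j k * d i j + ω i k * d j i = 0)
    (hd2 : ∀ i j : Fin n, ∑ k, ω i k * d k j = 2 * ω i j * d i i)
    (t₀ : Fin n)
    (T : Set (Fin n)) (hT : T = {j | {k | ω j k ≠ 0} = {k | ω t₀ k ≠ 0}})
    (Twl : Finset (Fin n)) (hTwl : ∀ i, i ∈ Twl ↔ (i ∈ T ∧ ω i i ≠ 0))
    (hwl : Twl.Nonempty)
    (hoff : ∀ i ∈ Twl, ∀ j ∈ Twl, i ≠ j → d i j = 0) :
    (∀ j ∈ T, j ∉ Twl → ∀ i ∈ Twl, ∑ k ∈ Twl, ω i k * d k j = 0) ∧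
    ((Matrix.of (fun a b : Twl => ω a.1 b.1)).det ≠ 0 →
      ∀ i j : Fin n, (i ∈ Twl ∨ j ∈ Twl) → d i j = 0) := by
  -- membership in T
  have hmemT : ∀ i : Fin n, i ∈ T ↔ {k | ω i k ≠ 0} = {k | ω t₀ k ≠ 0} := by
    intro i; rw [hT]; rfl
  -- d vanishes between distinct twin classes
  have h0 : ∀ i j : Fin n, {k | ω i k ≠ 0} ≠ {k | ω j k ≠ 0} → d i j = 0 := by
    intro i j hne
    have hij : i ≠ j := by rintro rfl; exact hne rfl
    have hne2 : ¬ ∀ k, (ω i k ≠ 0 ↔ ω j k ≠ 0) := fun h => hne (Set.ext h)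
    obtain ⟨m, hm⟩ := not_forall.mp hne2
    have hm' : (ω i m ≠ 0 ∧ ω j m = 0) ∨ (ω j m ≠ 0 ∧ ω i m = 0) := by
      by_cases him : ω i m = 0 <;> by_cases hjm : ω j m = 0 <;> tauto
    rcases hm' with ⟨him, hjm⟩ | ⟨hjm, him⟩
    · -- ω i m ≠ 0, ω j m = 0 : first get d j i = 0
      have hji : d j i = 0 := by
        have := hd1 i j m hij
        rw [hjm, zero_mul, zero_add] at this
        exact (mul_eq_zero.mp this).resolve_left him
      obtain ⟨m', hm'⟩ := hnd j
      have := hd1 i j m' hij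
      rw [hji, mul_zero, add_zero] at this
      exact (mul_eq_zero.mp this).resolve_left hm'
    · -- ω j m ≠ 0, ω i m = 0
      have := hd1 i j m hij
      rw [him, zero_mul, add_zero] at this
      exact (mul_eq_zero.mp this).resolve_left hjm
  -- loop characterization inside T
  have hloop : ∀ i ∈ T, ∀ k : Fin n, ω i k ≠ 0 ↔ ω t₀ k ≠ 0 := by
    intro i hi k
    have := (hmemT i).mp hi
    exact Set.ext_iff.mp this k
  -- full sum reduces to the Twl sum
  have hsum : ∀ j ∈ T, ∀ i ∈ Twl, ∑ k ∈ Twl, ω i k * d k j = 2 * ω i j * d i i := by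
    intro j hj i hi
    have hiT : i ∈ T := ((hTwl i).mp hi).1
    rw [← hd2 i j]
    refine Finset.sum_subset (Finset.subset_univ _) ?_
    intro k _ hk
    by_cases hik : ω i k = 0
    · rw [hik, zero_mul]
    · -- ω i k ≠ 0 hence ω t₀ k ≠ 0
      have ht0k : ω t₀ k ≠ 0 := (hloop i hiT k).mp hik
      by_cases hkT : k ∈ T
      · exact absurd ((hTwl k).mpr ⟨hkT, (hloop k hkT k).mpr ht0k⟩) hk
      · have : {m | ω k m ≠ 0} ≠ {m | ω j m ≠ 0} := by
          intro h
          apply hkT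
          rw [hmemT k, h, ← hmemT j]; exact hj
        rw [h0 k j this, mul_zero]
  -- claim 1
  have claim1 : ∀ j ∈ T, j ∉ Twl → ∀ i ∈ Twl, ∑ k ∈ Twl, ω i k * d k j = 0 := by
    intro j hj hjwl i hi
    have hjj : ω j j = 0 := by
      by_contra h
      exact hjwl ((hTwl j).mpr ⟨hj, h⟩)
    have hiT : i ∈ T := ((hTwl i).mp hi).1
    have hij : ω i j = 0 := by
      by_contra h
      exact ((hloop j hj j).mpr ((hloop i hiT j).mp h)) hjj
    rw [hsum j hj i hi, hij, mul_zero, zero_mul]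
  refine ⟨claim1, ?_⟩
  -- diagonal entries vanish on Twl
  have hdiag : ∀ i ∈ Twl, d i i = 0 := by
    intro i hi
    obtain ⟨hiT, hii⟩ := (hTwl i).mp hi
    have h1 := hsum i hiT i hi
    rw [Finset.sum_eq_single i (fun k hk hki => by rw [hoff k hk i hi hki, mul_zero])
      (fun h => absurd hi h)] at h1
    have : ω i i * d i i = 0 := by linear_combination -h1
    exact (mul_eq_zero.mp this).resolve_left hii
  intro hdet i j hij
  -- columns of d indexed by T \ Twl vanish on Twl rows
  have hTcol : ∀ j ∈ T, j ∉ Twl → ∀ k ∈ Twl, d k j = 0 := by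
    intro j hj hjwl k hk
    set M : Matrix Twl Twl K := Matrix.of (fun a b : Twl => ω a.1 b.1) with hM
    have hmv : M.mulVec (fun k : Twl => d k.1 j) = 0 := by
      funext i
      show ∑ x : Twl, ω i.1 x.1 * d x.1 j = 0
      rw [Finset.sum_coe_sort Twl (fun x => ω i.1 x * d x j)]
      exact claim1 j hj hjwl i.1 i.2
    have := Matrix.eq_zero_of_mulVec_eq_zero hdet hmv
    exact congrFun this ⟨k, hk⟩
  -- final case analysis
  by_cases heq : i = j
  · subst heq
    rcases hij with h | h <;> exact hdiag i h
  rcases hij with hi | hj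
  · by_cases hjwl : j ∈ Twl
    · exact hoff i hi j hjwl heq
    · by_cases hjT : j ∈ T
      · exact hTcol j hjT hjwl i hi
      · apply h0
        intro h
        apply hjT
        rw [hmemT j, ← h, ← hmemT i]
        exact ((hTwl i).mp hi).1
  · by_cases hiwl : i ∈ Twl
    · exact hoff i hiwl j hj heq
    · by_cases hiT : i ∈ T
      · -- i ∈ T \ Twl, j ∈ Twl
        have hji : d j i = 0 := hTcol i hiT hiwl j hj
        have hjj : ω j j ≠ 0 := ((hTwl j).mp hj).2
        have := hd1 i j j heq
        rw [hji, mul_zero, add_zero] at this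
        exact (mul_eq_zero.mp this).resolve_left hjj
      · apply h0
        intro h
        apply hiT
        rw [hmemT i, h, ← hmemT j]
        exact ((hTwl j).mp hj).1
end

section
/- Let A be an evolution algebra with natural basis B and structure matrix (ω_{ij}), and suppose there is a twin class T and an element i ∈ T such that D^1(j) = {i} for every j ∈ T. Then every derivation d satisfies d_{ij} = d_{ji} = d_{ii} = d_{jj} = 0 for every j ∈ T. -/
/-- If `T` is a twin class and `i ∈ T` satisfies `D¹(j) = {i}` for every
`j ∈ T`, then every derivation satisfies `d_{ij} = d_{ji} = d_{ii} = d_{jj} = 0`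
for every `j ∈ T`. -/
theorem derivation_class_single_descendant {K : Type*} [Field K] [CharZero K] {n : ℕ}
    (ω d : Matrix (Fin n) (Fin n) K)
    (hd1 : ∀ i j k : Fin n, i ≠ j → ω j k * d i j + ω i k * d j i = 0)
    (hd2 : ∀ i j : Fin n, ∑ k, ω i k * d k j = 2 * ω i j * d i i)
    (i : Fin n)
    (T : Set (Fin n)) (hT : T = {j | {k | ω j k ≠ 0} = {k | ω i k ≠ 0}})
    (hi : i ∈ T)
    (hdesc : ∀ j ∈ T, {k | ω j k ≠ 0} = {i}) :
    ∀ j ∈ T, d i j = 0 ∧ d j i = 0 ∧ d i i = 0 ∧ d j j = 0 := by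
  have hωi : ∀ j ∈ T, ∀ k, ω j k ≠ 0 ↔ k = i := by
    intro j hj k
    rw [← Set.mem_singleton_iff, ← hdesc j hj]
    rfl
  have hωii : ω i i ≠ 0 := (hωi i hi i).mpr rfl
  have hsum : ∀ j ∈ T, ∀ p, ∑ k, ω j k * d k p = ω j i * d i p := by
    intro j hj p
    refine Finset.sum_eq_single i ?_ (by simp)
    intro k _ hk
    have hz : ω j k = 0 := by
      by_contra h
      exact hk ((hωi j hj k).mp h)
    simp [hz]
  have hdii : d i i = 0 := by
    have h := hd2 i i
    rw [hsum i hi i] at h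
    have h0 : ω i i * d i i = 0 := by linear_combination -h
    exact (mul_eq_zero.mp h0).resolve_left hωii
  intro j hj
  by_cases hji : j = i
  · subst hji
    exact ⟨hdii, hdii, hdii, hdii⟩
  · have hωji : ω j i ≠ 0 := (hωi j hj i).mpr rfl
    have hdij : d i j = 0 := by
      have h := hd2 i j
      rw [hsum i hi j, hdii] at h
      have h0 : ω i i * d i j = 0 := by linear_combination h
      exact (mul_eq_zero.mp h0).resolve_left hωii
    have hdji : d j i = 0 := by
      have h := hd1 i j i (Ne.symm hji)
      rw [hdij] at h
      have h0 : ω i i * d j i = 0 := by linear_combination h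
      exact (mul_eq_zero.mp h0).resolve_left hωii
    have hdjj : d j j = 0 := by
      have h := hd2 j i
      rw [hsum j hj i, hdii] at h
      have h0 : ω j i * d j j = 0 := by linear_combination -h/2
      exact (mul_eq_zero.mp h0).resolve_left hωji
    exact ⟨hdij, hdji, hdii, hdjj⟩
end

section
/- Let A be a non-degenerate evolution algebra with natural basis B and structure matrix (ω_{ij}). Let T be a twin class relative to B and suppose there exists an index k such that D^1(k) ∩ T = {j} for some j ∈ T. Then every derivation d satisfies d_{jl} = d_{lj} = 0 for every l ∈ T \ {j}. -/
/-- If `T` is a twin class and some index `k` satisfies `D¹(k) ∩ T = {j}` for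
some `j ∈ T`, then every derivation satisfies `d_{jl} = d_{lj} = 0` for every
`l ∈ T \ {j}`. -/
theorem derivation_unique_intersection {K : Type*} [Field K] {n : ℕ}
    (ω d : Matrix (Fin n) (Fin n) K)
    (hnd : ∀ i : Fin n, ∃ k, ω i k ≠ 0)
    (hd1 : ∀ i j k : Fin n, i ≠ j → ω j k * d i j + ω i k * d j i = 0)
    (hd2 : ∀ i j : Fin n, ∑ k, ω i k * d k j = 2 * ω i j * d i i)
    (j : Fin n)
    (T : Set (Fin n)) (hT : T = {l | {m | ω l m ≠ 0} = {m | ω j m ≠ 0}})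
    (hj : j ∈ T)
    (k : Fin n) (hk : {m | ω k m ≠ 0} ∩ T = {j}) :
    ∀ l ∈ T, l ≠ j → d j l = 0 ∧ d l j = 0 := by
  intro l hl hlj
  subst hT
  have hlsupp : {m | ω l m ≠ 0} = {m | ω j m ≠ 0} := hl
  have hkj : ω k j ≠ 0 := by
    have hjmem : j ∈ ({j} : Set (Fin n)) := rfl
    rw [← hk] at hjmem
    exact hjmem.1
  have hkl : ω k l = 0 := by
    by_contra h
    have : l ∈ ({j} : Set (Fin n)) := by rw [← hk]; exact ⟨h, hl⟩
    exact hlj this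
  -- for m ≠ j in the support of row k, d m l = 0
  have aux : ∀ m, m ≠ j → ω k m ≠ 0 → d m l = 0 := by
    intro m hmj hkm
    have hmT : {p | ω m p ≠ 0} ≠ {p | ω j p ≠ 0} := by
      intro h
      have : m ∈ ({j} : Set (Fin n)) := by rw [← hk]; exact ⟨hkm, h⟩
      exact hmj this
    rw [← hlsupp] at hmT
    have hml : m ≠ l := by
      intro h; exact hmT (by rw [h])
    by_cases hcase : ∃ p, ω l p ≠ 0 ∧ ω m p = 0
    · obtain ⟨p, hlp, hmp⟩ := hcase
      have h1 := hd1 m l p hml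
      rw [hmp] at h1
      have : ω l p * d m l = 0 := by linear_combination h1
      exact (mul_eq_zero.mp this).resolve_left hlp
    · push_neg at hcase
      have hex : ∃ p, ω m p ≠ 0 ∧ ω l p = 0 := by
        by_contra h
        push_neg at h
        apply hmT
        ext p
        constructor
        · intro hp
          by_contra hlp
          exact (h p hp) (not_not.mp hlp)
        · intro hp; exact hcase p hp
      obtain ⟨p, hmp, hlp⟩ := hex
      have h1 := hd1 l m p hml.symm
      rw [hlp] at h1
      have hdlm : d l m = 0 := by
        have : ω m p * d l m = 0 := by linear_combination h1
        exact (mul_eq_zero.mp this).resolve_left hmp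
      obtain ⟨q, hlq⟩ := hnd l
      have h2 := hd1 m l q hml
      rw [hdlm] at h2
      have : ω l q * d m l = 0 := by linear_combination h2
      exact (mul_eq_zero.mp this).resolve_left hlq
  have hsum := hd2 k l
  rw [hkl] at hsum
  have hsum0 : ∑ p, ω k p * d p l = 0 := by
    rw [hsum]; ring
  have hsingle : ∑ p, ω k p * d p l = ω k j * d j l := by
    apply Finset.sum_eq_single
    · intro m _ hmj
      by_cases hkm : ω k m = 0
      · rw [hkm, zero_mul]
      · rw [aux m hmj hkm, mul_zero]
    · intro h; exact absurd (Finset.mem_univ j) h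
  have hdjl : d j l = 0 := by
    rw [hsingle] at hsum0
    exact (mul_eq_zero.mp hsum0).resolve_left hkj
  refine ⟨hdjl, ?_⟩
  obtain ⟨q, hjq⟩ := hnd j
  have h3 := hd1 l j q hlj
  rw [hdjl] at h3
  have : ω j q * d l j = 0 := by linear_combination h3
  exact (mul_eq_zero.mp this).resolve_left hjq
end
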